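/- Let E ∈ ℝ^{3×3} be a nonzero matrix satisfying E Eᵀ E = (1/2) trace(E Eᵀ) E and det E = 0. Then the two largest singular values of E are equal and the smallest is zero. -/

import Mathlib

open Matrix

theorem demazure_implies_singular_values
    (E : Matrix (Fin 3) (Fin 3) ℝ) (hE : E ≠ 0)
    (hcubic : E * Eᵀ * E = (1 / 2 * (E * Eᵀ).trace) • E)
    (hdet : E.det = 0)
    (hHerm : (Eᵀ * E).IsHermitian) :
    ∃ s : ℝ, 0 ≤ s ∧
      (Finset.univ.val.map fun i : Fin 3 => Real.sqrt (hHerm.eigenvalues i)) =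
        {s, s, 0} := by
  set c : ℝ := 1 / 2 * (E * Eᵀ).trace with hc
  set M : Matrix (Fin 3) (Fin 3) ℝ := Eᵀ * E with hMdef
  set lam : Fin 3 → ℝ := hHerm.eigenvalues with hlam
  -- M * M = c • M
  have hM2 : M * M = c • M := by
    have := congrArg (fun X => Eᵀ * X) hcubic
    simpa [hMdef, Matrix.mul_smul, mul_assoc] using this
  -- trace formula: c ≥ 0 and c = 0 → E = 0
  have htrE : (E * Eᵀ).trace = ∑ i, ∑ j, E i j * E i j := by
    simp [Matrix.trace, Matrix.diag, Matrix.mul_apply, Matrix.transpose_apply]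
  have hsq : (0:ℝ) ≤ ∑ i, ∑ j, E i j * E i j :=
    Finset.sum_nonneg fun i _ => Finset.sum_nonneg fun j _ => mul_self_nonneg _
  have hcnonneg : 0 ≤ c := by
    rw [hc, htrE]
    linarith
  have hcne : c ≠ 0 := by
    intro h0
    apply hE
    rw [hc, htrE] at h0
    have hsum : ∑ i, ∑ j, E i j * E i j = 0 := by linarith
    have h1 : ∀ i ∈ (Finset.univ : Finset (Fin 3)), ∑ j, E i j * E i j = 0 :=
      (Finset.sum_eq_zero_iff_of_nonneg
        (fun i _ => Finset.sum_nonneg fun j _ => mul_self_nonneg _)).mp hsum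
    ext i j
    have h2 : ∀ j ∈ (Finset.univ : Finset (Fin 3)), E i j * E i j = 0 :=
      (Finset.sum_eq_zero_iff_of_nonneg
        (fun j _ => mul_self_nonneg _)).mp (h1 i (Finset.mem_univ i))
    have h3 := mul_self_eq_zero.mp (h2 j (Finset.mem_univ j))
    simp [h3]
  -- each eigenvalue satisfies λ² = cλ
  have heig : ∀ i, lam i * lam i = c * lam i := by
    intro i
    have hv : M *ᵥ ⇑(hHerm.eigenvectorBasis i) = lam i • ⇑(hHerm.eigenvectorBasis i) :=
      hHerm.mulVec_eigenvectorBasis i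
    have h1 : (M * M) *ᵥ ⇑(hHerm.eigenvectorBasis i)
        = (lam i * lam i) • ⇑(hHerm.eigenvectorBasis i) := by
      rw [← Matrix.mulVec_mulVec, hv, Matrix.mulVec_smul, hv, smul_smul]
    have h2 : (c • M) *ᵥ ⇑(hHerm.eigenvectorBasis i)
        = (c * lam i) • ⇑(hHerm.eigenvectorBasis i) := by
      rw [Matrix.smul_mulVec, hv, smul_smul]
    rw [hM2, h2] at h1
    have hvne : ⇑(hHerm.eigenvectorBasis i) ≠ 0 := by
      have := hHerm.eigenvectorBasis.orthonormal.ne_zero i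
      intro h
      apply this
      ext k
      exact congrFun h k
    rcases Function.ne_iff.mp hvne with ⟨k, hk⟩
    have := congrFun h1 k
    simp only [Pi.smul_apply, smul_eq_mul] at this
    exact mul_right_cancel₀ hk (by linarith [this])
  have heig' : ∀ i, lam i = 0 ∨ lam i = c := by
    intro i
    have h : lam i * (lam i - c) = 0 := by linear_combination heig i
    rcases mul_eq_zero.mp h with h | h
    · exact Or.inl h
    · exact Or.inr (by linarith [sub_eq_zero.mp h])
  -- trace of M = sum of eigenvalues
  have htr : lam 0 + lam 1 + lam 2 = 2 * c := by
    have hst := congrArg Matrix.trace hHerm.spectral_theorem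
    rw [Unitary.conjStarAlgAut_apply] at hst
    rw [Matrix.trace_mul_cycle] at hst
    have hu : (star (hHerm.eigenvectorUnitary : Matrix (Fin 3) (Fin 3) ℝ)) *
        (hHerm.eigenvectorUnitary : Matrix (Fin 3) (Fin 3) ℝ) = 1 := by
      exact_mod_cast Unitary.coe_star_mul_self hHerm.eigenvectorUnitary
    rw [hu, one_mul, Matrix.trace_diagonal] at hst
    have htrM : M.trace = (E * Eᵀ).trace := Matrix.trace_mul_comm Eᵀ E
    rw [htrM] at hst
    have : (E * Eᵀ).trace = ∑ i, lam i := by exact_mod_cast hst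
    rw [Fin.sum_univ_three] at this
    rw [hc]
    linarith
  -- some eigenvalue is zero
  have hdetM : ∏ i, lam i = 0 := by
    have h1 : M.det = 0 := by
      rw [hMdef, Matrix.det_mul, hdet, mul_zero]
    have h2 := hHerm.det_eq_prod_eigenvalues
    rw [h1] at h2
    exact_mod_cast h2.symm
  have hzero : lam 0 = 0 ∨ lam 1 = 0 ∨ lam 2 = 0 := by
    rw [Fin.prod_univ_three] at hdetM
    rcases mul_eq_zero.mp hdetM with h | h
    · rcases mul_eq_zero.mp h with h | h
      · exact Or.inl h
      · exact Or.inr (Or.inl h)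
    · exact Or.inr (Or.inr h)
  refine ⟨Real.sqrt c, Real.sqrt_nonneg c, ?_⟩
  have hlist : (Finset.univ.val.map fun i : Fin 3 => Real.sqrt (lam i))
      = {Real.sqrt (lam 0), Real.sqrt (lam 1), Real.sqrt (lam 2)} := rfl
  rw [hlist]
  rcases heig' 0 with h0 | h0 <;> rcases heig' 1 with h1 | h1 <;> rcases heig' 2 with h2 | h2
  · exfalso; rw [h0, h1, h2] at htr; apply hcne; linarith
  · exfalso; rw [h0, h1, h2] at htr; apply hcne; linarith
  · exfalso; rw [h0, h1, h2] at htr; apply hcne; linarith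
  · rw [h0, h1, h2, Real.sqrt_zero]
    exact (Multiset.cons_swap _ _ _).trans (congrArg _ (Multiset.cons_swap _ _ _))
  · exfalso; rw [h0, h1, h2] at htr; apply hcne; linarith
  · rw [h0, h1, h2, Real.sqrt_zero]
    exact congrArg _ (Multiset.cons_swap _ _ _)
  · rw [h0, h1, h2, Real.sqrt_zero]
  · exfalso; rw [h0, h1, h2] at htr; apply hcne; linarith
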